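/- Let A, B ∈ GL(m,ℝ) and let w be a unit vector attaining ‖Bw‖ = ‖B‖. If α is the angle between the line spanned by Bw and the hyperplane S_{m−1}(A) (the span of the eigenvectors of √(A*A) corresponding to the m−1 smallest singular values), then ‖AB‖ ≥ σ_1(A)·‖B‖·sin α. -/

import Mathlib

noncomputable def singVal {m : ℕ} (A : Matrix (Fin m) (Fin m) ℝ) : Fin m → ℝ :=
  fun i =>
    Real.sqrt
      (((Matrix.isHermitian_conjTranspose_mul_self A).eigenvalues ∘
        Tuple.sort ((Matrix.isHermitian_conjTranspose_mul_self A).eigenvalues)) i.rev)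

/-- The square root of a positive semidefinite matrix, as `Matrix.PosSemidef.sqrt` was
defined in Mathlib (December 2024); removed from Mathlib since. -/
noncomputable def Matrix.PosSemidef.sqrt {n 𝕜 : Type*} [Fintype n] [DecidableEq n] [RCLike 𝕜]
    [PartialOrder 𝕜] {A : Matrix n n 𝕜} (hA : A.PosSemidef) : Matrix n n 𝕜 :=
  hA.1.eigenvectorUnitary.1 * Matrix.diagonal ((↑) ∘ (√·) ∘ hA.1.eigenvalues) *
    (star hA.1.eigenvectorUnitary : Matrix n n 𝕜)

noncomputable def Usub {m : ℕ} (A : Matrix (Fin m) (Fin m) ℝ) (p : ℕ) :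
    Submodule ℝ (EuclideanSpace ℝ (Fin m)) :=
  ⨆ i : Fin m, ⨆ _ : (i : ℕ) < p,
    Module.End.eigenspace
      (Matrix.toEuclideanLin ((Matrix.posSemidef_self_mul_conjTranspose A).sqrt))
      (singVal A i)

/-- The hyperplane `S_{m−1}(A) := U_{m−1}(A⁻¹)`, spanned by the eigenvectors of
`√(AᴴA)` corresponding to the `m−1` smallest singular values. -/
noncomputable def Shyp {m : ℕ} (A : GL (Fin m) ℝ) :
    Submodule ℝ (EuclideanSpace ℝ (Fin m)) :=
  Usub ((↑(A⁻¹) : Matrix (Fin m) (Fin m) ℝ)) (m - 1)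

theorem aux_sqrt_psd {m : ℕ} {H : Matrix (Fin m) (Fin m) ℝ} (hH : H.PosSemidef) :
    hH.sqrt.PosSemidef := by
  unfold Matrix.PosSemidef.sqrt
  have hD : (Matrix.diagonal ((RCLike.ofReal : ℝ → ℝ) ∘ (√·) ∘ hH.1.eigenvalues)).PosSemidef := by
    rw [Matrix.posSemidef_diagonal_iff]
    intro i
    exact Real.sqrt_nonneg _
  exact hD.mul_mul_conjTranspose_same (hH.1.eigenvectorUnitary : Matrix (Fin m) (Fin m) ℝ)

theorem aux_sqrt_mul_self {m : ℕ} {H : Matrix (Fin m) (Fin m) ℝ} (hH : H.PosSemidef) :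
    hH.sqrt * hH.sqrt = H := by
  unfold Matrix.PosSemidef.sqrt
  set U : Matrix (Fin m) (Fin m) ℝ := hH.1.eigenvectorUnitary.1
  have hU : (star hH.1.eigenvectorUnitary : Matrix (Fin m) (Fin m) ℝ) * U = 1 :=
    Unitary.star_mul_self_of_mem hH.1.eigenvectorUnitary.2
  have hDD : Matrix.diagonal ((RCLike.ofReal : ℝ → ℝ) ∘ (√·) ∘ hH.1.eigenvalues) *
      Matrix.diagonal ((RCLike.ofReal : ℝ → ℝ) ∘ (√·) ∘ hH.1.eigenvalues) =
      Matrix.diagonal (RCLike.ofReal ∘ hH.1.eigenvalues) := by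
    rw [Matrix.diagonal_mul_diagonal]
    congr 1; funext i
    simp [Real.mul_self_sqrt (hH.eigenvalues_nonneg i)]
  calc _ = U * (Matrix.diagonal ((RCLike.ofReal : ℝ → ℝ) ∘ (√·) ∘ hH.1.eigenvalues) *
      ((star hH.1.eigenvectorUnitary : Matrix (Fin m) (Fin m) ℝ) * U) *
      Matrix.diagonal ((RCLike.ofReal : ℝ → ℝ) ∘ (√·) ∘ hH.1.eigenvalues)) *
      (star hH.1.eigenvectorUnitary : Matrix (Fin m) (Fin m) ℝ) := by
        simp only [Matrix.mul_assoc]; rfl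
    _ = H := by
      rw [hU, Matrix.mul_one, hDD]
      conv_rhs => rw [hH.1.spectral_theorem]
      simp [U]
open scoped InnerProductSpace Matrix

section auxCore
variable {m : ℕ} {ι : Type*} [Fintype ι] [DecidableEq ι]
variable (e : OrthonormalBasis ι ℝ (EuclideanSpace ℝ (Fin m)))
  (T : EuclideanSpace ℝ (Fin m) →ₗ[ℝ] EuclideanSpace ℝ (Fin m)) (μ : ι → ℝ)

theorem aux_repr_lin (h : ∀ i, T (e i) = μ i • e i) (x : EuclideanSpace ℝ (Fin m)) (i : ι) :
    e.repr (T x) i = μ i * e.repr x i := by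
  have hx : T x = ∑ j, (μ j * e.repr x j) • e j := by
    conv_lhs => rw [← e.sum_repr x]
    rw [map_sum]
    simp [h, smul_smul, mul_comm]
  rw [e.repr_apply_apply, hx, inner_sum]
  simp only [real_inner_smul_right, orthonormal_iff_ite.mp e.orthonormal]
  rw [Finset.sum_eq_single i]
  · simp [e.repr_apply_apply, mul_comm]
  · intro b _ hb; simp [if_neg (Ne.symm hb)]
  · simp

omit [DecidableEq ι] in
theorem aux_normsq_repr (x : EuclideanSpace ℝ (Fin m)) : ‖x‖ ^ 2 = ∑ i, (e.repr x i) ^ 2 := by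
  rw [← real_inner_self_eq_norm_sq, ← e.repr.inner_map_map x x, PiLp.inner_apply]
  simp [pow_two]

theorem aux_inner_lin (h : ∀ i, T (e i) = μ i • e i) (x : EuclideanSpace ℝ (Fin m)) :
    ⟪x, T x⟫_ℝ = ∑ i, μ i * (e.repr x i) ^ 2 := by
  rw [← e.repr.inner_map_map x (T x), PiLp.inner_apply]
  simp only [RCLike.inner_apply, conj_trivial, aux_repr_lin e T μ h x]
  exact Finset.sum_congr rfl (fun i _ => by ring)

theorem aux_normsq_lin (h : ∀ i, T (e i) = μ i • e i) (x : EuclideanSpace ℝ (Fin m)) :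
    ‖T x‖ ^ 2 = ∑ i, (μ i * e.repr x i) ^ 2 := by
  rw [aux_normsq_repr e (T x)]
  exact Finset.sum_congr rfl (fun i _ => by rw [aux_repr_lin e T μ h x])

theorem aux_eig_mem (h : ∀ i, T (e i) = μ i • e i) {x : EuclideanSpace ℝ (Fin m)} {ν : ℝ}
    (hx : T x = ν • x) (hx0 : x ≠ 0) : ∃ i, μ i = ν := by
  have hrepr : e.repr x ≠ 0 := fun hc => hx0 (by simpa using congrArg e.repr.symm hc)
  obtain ⟨i, hi⟩ : ∃ i, e.repr x i ≠ 0 := by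
    by_contra hc
    push_neg at hc
    exact hrepr (by ext j; exact hc j)
  refine ⟨i, ?_⟩
  have h1 : e.repr (T x) i = μ i * e.repr x i := aux_repr_lin e T μ h x i
  have h2 : e.repr (T x) i = ν * e.repr x i := by rw [hx, map_smul]; rfl
  have h3 := h1.symm.trans h2
  exact mul_right_cancel₀ hi h3

theorem aux_rayleigh_min (h : ∀ i, T (e i) = μ i • e i) {c : ℝ} (hc : ∀ i, c ≤ μ i)
    (x : EuclideanSpace ℝ (Fin m)) : c * ‖x‖ ^ 2 ≤ ⟪x, T x⟫_ℝ := by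
  rw [aux_inner_lin e T μ h x, aux_normsq_repr e x, Finset.mul_sum]
  exact Finset.sum_le_sum fun i _ => mul_le_mul_of_nonneg_right (hc i) (sq_nonneg _)

theorem aux_norm_lin_le (h : ∀ i, T (e i) = μ i • e i) {l : ℝ} (hl : 0 ≤ l)
    {x : EuclideanSpace ℝ (Fin m)} (hzero : ∀ i, e.repr x i = 0 ∨ |μ i| ≤ l) :
    ‖T x‖ ≤ l * ‖x‖ := by
  have hsq : ‖T x‖ ^ 2 ≤ (l * ‖x‖) ^ 2 := by
    rw [aux_normsq_lin e T μ h x, mul_pow, aux_normsq_repr e x, Finset.mul_sum]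
    refine Finset.sum_le_sum fun i _ => ?_
    rcases hzero i with h0 | hle
    · simp [h0]
    · rw [mul_pow]
      exact mul_le_mul_of_nonneg_right
        (by nlinarith [abs_nonneg (μ i), sq_abs (μ i)]) (sq_nonneg _)
  have h4 := Real.sqrt_le_sqrt hsq
  rwa [Real.sqrt_sq (norm_nonneg _), Real.sqrt_sq (by positivity)] at h4

end auxCore

section auxMat
variable {m : ℕ}

theorem aux_toEucl_eig {H : Matrix (Fin m) (Fin m) ℝ} (hH : H.IsHermitian) (j : Fin m) :
    Matrix.toEuclideanLin H (hH.eigenvectorBasis j)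
      = hH.eigenvalues j • hH.eigenvectorBasis j := by
  have h1 := hH.mulVec_eigenvectorBasis j
  ext k
  rw [Matrix.toEuclideanLin_apply]
  exact congrFun h1 k

theorem aux_toEucl_mul (M N : Matrix (Fin m) (Fin m) ℝ) (x : EuclideanSpace ℝ (Fin m)) :
    Matrix.toEuclideanLin (M * N) x = Matrix.toEuclideanLin M (Matrix.toEuclideanLin N x) := by
  simp [Matrix.toEuclideanLin_apply, Matrix.mulVec_mulVec]

theorem aux_toEucl_one (x : EuclideanSpace ℝ (Fin m)) :
    Matrix.toEuclideanLin (1 : Matrix (Fin m) (Fin m) ℝ) x = x := by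
  ext k
  rw [Matrix.toEuclideanLin_apply, Matrix.one_mulVec]

/-- every eigenvalue of a Hermitian matrix is one of `hH.eigenvalues`. -/
theorem aux_eigenvalue_mem {H : Matrix (Fin m) (Fin m) ℝ} (hH : H.IsHermitian)
    {x : EuclideanSpace ℝ (Fin m)} {ν : ℝ}
    (hx : Matrix.toEuclideanLin H x = ν • x) (hx0 : x ≠ 0) : ∃ k, hH.eigenvalues k = ν :=
  aux_eig_mem hH.eigenvectorBasis _ _ (aux_toEucl_eig hH) hx hx0

end auxMat

set_option maxHeartbeats 2000000 in
theorem norm_mul_ge_of_angle {m : ℕ} (hm : 2 ≤ m) (A B : GL (Fin m) ℝ)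
    (w : EuclideanSpace ℝ (Fin m)) (hw : ‖w‖ = 1)
    (hmax : ‖Matrix.toEuclideanCLM (𝕜 := ℝ) ((↑B : Matrix (Fin m) (Fin m) ℝ)) w‖ =
      ‖Matrix.toEuclideanCLM (𝕜 := ℝ) ((↑B : Matrix (Fin m) (Fin m) ℝ))‖) :
    singVal ((↑A : Matrix (Fin m) (Fin m) ℝ)) ⟨0, by omega⟩ *
        ‖Matrix.toEuclideanCLM (𝕜 := ℝ) ((↑B : Matrix (Fin m) (Fin m) ℝ))‖ *
        Metric.infDist
          ((‖Matrix.toEuclideanCLM (𝕜 := ℝ) ((↑B : Matrix (Fin m) (Fin m) ℝ)) w‖)⁻¹ •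
            Matrix.toEuclideanCLM (𝕜 := ℝ) ((↑B : Matrix (Fin m) (Fin m) ℝ)) w)
          ((Shyp A : Set (EuclideanSpace ℝ (Fin m)))) ≤
      ‖Matrix.toEuclideanCLM (𝕜 := ℝ)
        ((↑A : Matrix (Fin m) (Fin m) ℝ) * (↑B : Matrix (Fin m) (Fin m) ℝ))‖ := by
  classical
  haveI : NeZero m := ⟨by omega⟩
  have hCL : ∀ (N : Matrix (Fin m) (Fin m) ℝ) (y : EuclideanSpace ℝ (Fin m)),
      Matrix.toEuclideanCLM (𝕜 := ℝ) N y = Matrix.toEuclideanLin N y := fun N y => by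
    rw [← Matrix.coe_toEuclideanCLM_eq_toEuclideanLin]; rfl
  set MA : Matrix (Fin m) (Fin m) ℝ := ↑A with hMA
  set MB : Matrix (Fin m) (Fin m) ℝ := ↑B with hMB
  set Mi : Matrix (Fin m) (Fin m) ℝ := ↑(A⁻¹) with hMi
  have hMiA : Mi * MA = 1 := A.inv_mul
  have hAMi : MA * Mi = 1 := A.mul_inv
  -- the vectors
  set v : EuclideanSpace ℝ (Fin m) := Matrix.toEuclideanCLM (𝕜 := ℝ) MB w with hv
  set x : EuclideanSpace ℝ (Fin m) := Matrix.toEuclideanCLM (𝕜 := ℝ) (MA * MB) w with hx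
  have hvx : Matrix.toEuclideanLin Mi x = v := by
    rw [hx, hv, hCL, hCL, ← aux_toEucl_mul, ← mul_assoc, hMiA, one_mul]
  have hv0 : v ≠ 0 := by
    intro hc
    have h1 : Matrix.toEuclideanLin ((↑(B⁻¹) : Matrix (Fin m) (Fin m) ℝ)) v = w := by
      rw [hv, hCL, ← aux_toEucl_mul, B.inv_mul, aux_toEucl_one]
    rw [hc, map_zero] at h1
    rw [← h1] at hw
    simp at hw
  have hvnorm : (0:ℝ) < ‖v‖ := norm_pos_iff.mpr hv0
  -- the operators
  set C : Matrix (Fin m) (Fin m) ℝ := (Matrix.posSemidef_self_mul_conjTranspose Mi).sqrt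
    with hCdef
  have hCpsd : C.PosSemidef := aux_sqrt_psd (Matrix.posSemidef_self_mul_conjTranspose Mi)
  have hCherm : C.IsHermitian := hCpsd.1
  have hCC : C * C = Mi * Miᴴ := aux_sqrt_mul_self (Matrix.posSemidef_self_mul_conjTranspose Mi)
  set S : Submodule ℝ (EuclideanSpace ℝ (Fin m)) := Shyp A with hS
  -- u = component of v orthogonal to S
  set u : EuclideanSpace ℝ (Fin m) := v - (S.orthogonalProjection v : EuclideanSpace ℝ (Fin m))
    with hu
  have humem : u ∈ Sᗮ := S.sub_starProjection_mem_orthogonal v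
  -- eigen data of C
  set eC := hCherm.eigenvectorBasis with heC
  set μC := hCherm.eigenvalues with hμC
  have hTC : ∀ j, Matrix.toEuclideanLin C (eC j) = μC j • eC j := aux_toEucl_eig hCherm
  -- eigen data of Miᴴ * Mi (for singVal Mi)
  set hHM := Matrix.isHermitian_conjTranspose_mul_self Mi with hHMdef
  set eigM := hHM.eigenvalues with heigM
  set lam := singVal Mi ⟨m - 1, by omega⟩ with hlam
  have hlam_eq : lam = Real.sqrt ((eigM ∘ Tuple.sort eigM) ⟨0, by omega⟩) := by
    rw [hlam]
    unfold singVal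
    congr 1
    · congr 1
      apply Fin.ext
      rw [Fin.val_rev]
      simp
      omega
  have hlam0 : 0 ≤ lam := Real.sqrt_nonneg _
  -- sorted eigenvalue facts
  have hsortM_min : ∀ k, (eigM ∘ Tuple.sort eigM) ⟨0, by omega⟩ ≤ eigM k := by
    intro k
    have h1 : eigM k = (eigM ∘ Tuple.sort eigM) ((Tuple.sort eigM)⁻¹ k) := by
      simp
    rw [h1]
    exact Tuple.monotone_sort eigM (Fin.zero_le _)
  -- CLAIM 1 : the dichotomy for the eigenvalues of C
  have claim1 : ∀ j, eC.repr u j = 0 ∨ |μC j| ≤ lam := by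
    intro j
    by_cases hj : ∃ i : Fin m, (i : ℕ) < m - 1 ∧ singVal Mi i = μC j
    · left
      obtain ⟨i, hilt, hieq⟩ := hj
      have hmem : eC j ∈ S := by
        rw [hS]
        unfold Shyp Usub
        refine Submodule.mem_iSup_of_mem i (Submodule.mem_iSup_of_mem hilt ?_)
        rw [Module.End.mem_eigenspace_iff, hieq]
        exact hTC j
      have := (Submodule.mem_orthogonal S u).mp humem (eC j) hmem
      rw [eC.repr_apply_apply]
      exact this
    · right
      push_neg at hj
      -- μC j is an eigenvalue of C hence (μC j)^2 is an eigenvalue of Mi * Miᴴ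
      have hej0 : eC j ≠ 0 := by
        intro hc
        have := eC.orthonormal.1 j
        rw [hc] at this
        simp at this
      have hMM : Matrix.toEuclideanLin (Mi * Miᴴ) (eC j) = (μC j) ^ 2 • eC j := by
        rw [← hCC, aux_toEucl_mul, hTC j, map_smul, hTC j, smul_smul, pow_two]
      set y : EuclideanSpace ℝ (Fin m) := Matrix.toEuclideanLin Miᴴ (eC j) with hy
      have hy0 : y ≠ 0 := by
        intro hc
        have h1 : Matrix.toEuclideanLin (MAᴴ * Miᴴ) (eC j) = eC j := by
          rw [← Matrix.conjTranspose_mul, hMiA, Matrix.conjTranspose_one, aux_toEucl_one]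
        rw [aux_toEucl_mul, ← hy, hc, map_zero] at h1
        exact hej0 h1.symm
      have hyeig : Matrix.toEuclideanLin (Miᴴ * Mi) y = (μC j) ^ 2 • y := by
        rw [hy, ← aux_toEucl_mul, mul_assoc, aux_toEucl_mul, hMM, map_smul]
      obtain ⟨k, hk0⟩ := aux_eigenvalue_mem hHM hyeig hy0
      have hk : eigM k = (μC j) ^ 2 := hk0
      -- relate to sorted singular values
      set p : Fin m := ((Tuple.sort eigM)⁻¹ k).rev with hp
      have hpk : singVal Mi p = Real.sqrt (eigM k) := by
        unfold singVal
        rw [hp, Fin.rev_rev]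
        simp
        exact congrArg Real.sqrt (congrArg eigM (Equiv.apply_symm_apply _ _))
      have hμC0 : 0 ≤ μC j := hCpsd.eigenvalues_nonneg j
      have hsv : singVal Mi p = μC j := by
        rw [hpk, hk, Real.sqrt_sq_eq_abs, abs_of_nonneg hμC0]
      have hple : (p : ℕ) < m := p.isLt
      rcases lt_or_ge (p : ℕ) (m - 1) with hplt | hpge
      · exact absurd hsv (hj p hplt)
      · have hpe : p = ⟨m - 1, by omega⟩ := Fin.ext (by simp; omega)
        rw [abs_of_nonneg hμC0, ← hsv, hpe, ← hlam]
  -- STEP 2/3 : ‖Miᴴ u‖ ≤ lam * ‖u‖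
  have hadjMi : Matrix.toEuclideanLin Miᴴ = LinearMap.adjoint (Matrix.toEuclideanLin Mi) :=
    Matrix.toEuclideanLin_conjTranspose_eq_adjoint Mi
  have hCu : ‖Matrix.toEuclideanLin C u‖ ≤ lam * ‖u‖ :=
    aux_norm_lin_le eC _ μC hTC hlam0 claim1
  have hMhu : ‖Matrix.toEuclideanLin Miᴴ u‖ ≤ lam * ‖u‖ := by
    have hsq : ‖Matrix.toEuclideanLin Miᴴ u‖ ^ 2 = ‖Matrix.toEuclideanLin C u‖ ^ 2 := by
      rw [← real_inner_self_eq_norm_sq, ← real_inner_self_eq_norm_sq]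
      have hCadj : LinearMap.adjoint (Matrix.toEuclideanLin C) = Matrix.toEuclideanLin C := by
        rw [← Matrix.toEuclideanLin_conjTranspose_eq_adjoint, hCherm.eq]
      calc ⟪Matrix.toEuclideanLin Miᴴ u, Matrix.toEuclideanLin Miᴴ u⟫_ℝ
          = ⟪u, Matrix.toEuclideanLin Mi (Matrix.toEuclideanLin Miᴴ u)⟫_ℝ := by
            rw [hadjMi]
            exact LinearMap.adjoint_inner_left _ _ _
        _ = ⟪u, Matrix.toEuclideanLin C (Matrix.toEuclideanLin C u)⟫_ℝ := by
            rw [← aux_toEucl_mul, ← aux_toEucl_mul, hCC]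
        _ = ⟪(LinearMap.adjoint (Matrix.toEuclideanLin C)) u,
              Matrix.toEuclideanLin C u⟫_ℝ := (LinearMap.adjoint_inner_left _ _ _).symm
        _ = ⟪Matrix.toEuclideanLin C u, Matrix.toEuclideanLin C u⟫_ℝ := by rw [hCadj]
    have h5 : ‖Matrix.toEuclideanLin Miᴴ u‖ = ‖Matrix.toEuclideanLin C u‖ := by
      have := congrArg Real.sqrt hsq
      rwa [Real.sqrt_sq (norm_nonneg _), Real.sqrt_sq (norm_nonneg _)] at this
    rw [h5]
    exact hCu
  -- STEP 4/5 : ‖u‖ ≤ lam * ‖x‖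
  have hinner : ‖u‖ ^ 2 = ⟪v, u⟫_ℝ := by
    have hperp : ⟪(S.orthogonalProjection v : EuclideanSpace ℝ (Fin m)), u⟫_ℝ = 0 :=
      (Submodule.mem_orthogonal S u).mp humem _ (SetLike.coe_mem _)
    have hv' : v = (S.orthogonalProjection v : EuclideanSpace ℝ (Fin m)) + u := by
      rw [hu]; abel
    rw [hv', inner_add_left, hperp, zero_add, real_inner_self_eq_norm_sq]
  have hule : ‖u‖ ≤ lam * ‖x‖ := by
    rcases eq_or_ne ‖u‖ 0 with h0 | h0
    · rw [h0]; positivity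
    have hineq : ‖u‖ ^ 2 ≤ ‖x‖ * (lam * ‖u‖) := by
      rw [hinner, ← hvx]
      calc ⟪Matrix.toEuclideanLin Mi x, u⟫_ℝ
          = ⟪x, Matrix.toEuclideanLin Miᴴ u⟫_ℝ := by
            rw [hadjMi, LinearMap.adjoint_inner_right]
        _ ≤ ‖x‖ * ‖Matrix.toEuclideanLin Miᴴ u‖ := real_inner_le_norm _ _
        _ ≤ ‖x‖ * (lam * ‖u‖) := by
            exact mul_le_mul_of_nonneg_left hMhu (norm_nonneg _)
    have hupos : 0 < ‖u‖ := lt_of_le_of_ne (norm_nonneg _) (Ne.symm h0)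
    nlinarith
  -- STEP 6 : singVal MA 0 * lam ≤ 1
  set σ := singVal MA ⟨0, by omega⟩ with hσ
  have hσ0 : 0 ≤ σ := Real.sqrt_nonneg _
  have hσlam : σ * lam ≤ 1 := by
    set hHA := Matrix.isHermitian_conjTranspose_mul_self MA with hHAdef
    set eigA := hHA.eigenvalues with heigA
    have hσ_eq : σ = Real.sqrt ((eigA ∘ Tuple.sort eigA) ⟨m - 1, by omega⟩) := by
      rw [hσ]
      unfold singVal
      have hrev : (⟨0, by omega⟩ : Fin m).rev = ⟨m - 1, by omega⟩ := by
        apply Fin.ext; rw [Fin.val_rev]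
      rw [hrev]
    set k0 : Fin m := Tuple.sort eigA ⟨m - 1, by omega⟩ with hk0
    set z := hHA.eigenvectorBasis k0 with hz
    set ν := eigA k0 with hν
    have hσν : σ = Real.sqrt ν := by rw [hσ_eq]; rfl
    have hz1 : ‖z‖ = 1 := hHA.eigenvectorBasis.orthonormal.1 k0
    have hzeig : Matrix.toEuclideanLin (MAᴴ * MA) z = ν • z := aux_toEucl_eig hHA k0
    set x0 := Matrix.toEuclideanLin MA z with hx0
    have hx0norm : ‖x0‖ ^ 2 = ν := by
      rw [← real_inner_self_eq_norm_sq, hx0]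
      calc ⟪Matrix.toEuclideanLin MA z, Matrix.toEuclideanLin MA z⟫_ℝ
          = ⟪z, Matrix.toEuclideanLin MAᴴ (Matrix.toEuclideanLin MA z)⟫_ℝ := by
            rw [Matrix.toEuclideanLin_conjTranspose_eq_adjoint,
              LinearMap.adjoint_inner_right]
        _ = ⟪z, ν • z⟫_ℝ := by rw [← aux_toEucl_mul, hzeig]
        _ = ν := by rw [real_inner_smul_right, real_inner_self_eq_norm_sq, hz1]; ring
    have hMx0 : ‖Matrix.toEuclideanLin Mi x0‖ = 1 := by
      rw [hx0, ← aux_toEucl_mul, hMiA, aux_toEucl_one, hz1]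
    -- Rayleigh bound for Miᴴ Mi at x0
    have hray : (eigM ∘ Tuple.sort eigM) ⟨0, by omega⟩ * ‖x0‖ ^ 2
        ≤ ⟪x0, Matrix.toEuclideanLin (Miᴴ * Mi) x0⟫_ℝ := by
      exact aux_rayleigh_min hHM.eigenvectorBasis _ eigM (aux_toEucl_eig hHM) hsortM_min x0
    have hray2 : ⟪x0, Matrix.toEuclideanLin (Miᴴ * Mi) x0⟫_ℝ = 1 := by
      calc ⟪x0, Matrix.toEuclideanLin (Miᴴ * Mi) x0⟫_ℝ
          = ⟪x0, Matrix.toEuclideanLin Miᴴ (Matrix.toEuclideanLin Mi x0)⟫_ℝ := by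
            rw [aux_toEucl_mul]
        _ = ⟪Matrix.toEuclideanLin Mi x0, Matrix.toEuclideanLin Mi x0⟫_ℝ := by
            rw [hadjMi, LinearMap.adjoint_inner_right]
        _ = 1 := by rw [real_inner_self_eq_norm_sq, hMx0]; norm_num
    set ρ := (eigM ∘ Tuple.sort eigM) ⟨0, by omega⟩ with hρ
    have hρ0 : 0 ≤ ρ := by
      rw [hρ]
      exact (Matrix.posSemidef_conjTranspose_mul_self Mi).eigenvalues_nonneg _
    have hν0 : 0 ≤ ν := by rw [← hx0norm]; positivity
    have hρν : ρ * ν ≤ 1 := by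
      rw [← hray2, ← hx0norm]
      exact hray
    calc σ * lam = Real.sqrt ν * Real.sqrt ρ := by rw [hσν, hlam_eq]
      _ = Real.sqrt (ν * ρ) := (Real.sqrt_mul hν0 ρ).symm
      _ ≤ Real.sqrt 1 := Real.sqrt_le_sqrt (by nlinarith)
      _ = 1 := Real.sqrt_one
  -- STEP 7 : assemble
  have hxle : ‖x‖ ≤ ‖Matrix.toEuclideanCLM (𝕜 := ℝ) (MA * MB)‖ := by
    calc ‖x‖ ≤ ‖Matrix.toEuclideanCLM (𝕜 := ℝ) (MA * MB)‖ * ‖w‖ :=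
          (Matrix.toEuclideanCLM (𝕜 := ℝ) (MA * MB)).le_opNorm w
      _ = ‖Matrix.toEuclideanCLM (𝕜 := ℝ) (MA * MB)‖ := by rw [hw, mul_one]
  have hdist : Metric.infDist (‖v‖⁻¹ • v) (S : Set (EuclideanSpace ℝ (Fin m)))
      ≤ ‖v‖⁻¹ * ‖u‖ := by
    have hmem : ‖v‖⁻¹ • (S.orthogonalProjection v : EuclideanSpace ℝ (Fin m))
        ∈ (S : Set (EuclideanSpace ℝ (Fin m))) :=
      S.smul_mem _ (SetLike.coe_mem _)
    calc Metric.infDist (‖v‖⁻¹ • v) (S : Set (EuclideanSpace ℝ (Fin m)))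
        ≤ dist (‖v‖⁻¹ • v)
            (‖v‖⁻¹ • (S.orthogonalProjection v : EuclideanSpace ℝ (Fin m))) :=
          Metric.infDist_le_dist_of_mem hmem
      _ = ‖v‖⁻¹ * ‖u‖ := by
          rw [dist_smul₀, dist_eq_norm, ← hu]
          congr 1
          simp [abs_of_nonneg (le_of_lt (inv_pos.mpr hvnorm))]
  have hBnorm : ‖Matrix.toEuclideanCLM (𝕜 := ℝ) MB‖ = ‖v‖ := hmax.symm
  calc σ * ‖Matrix.toEuclideanCLM (𝕜 := ℝ) MB‖
        * Metric.infDist (‖v‖⁻¹ • v) (S : Set (EuclideanSpace ℝ (Fin m)))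
      ≤ σ * ‖v‖ * (‖v‖⁻¹ * ‖u‖) := by
        rw [hBnorm]
        exact mul_le_mul_of_nonneg_left hdist (by positivity)
    _ = σ * ‖u‖ := by
        rw [show σ * ‖v‖ * (‖v‖⁻¹ * ‖u‖) = σ * ‖u‖ * (‖v‖ * ‖v‖⁻¹) from by ring,
          mul_inv_cancel₀ (ne_of_gt hvnorm), mul_one]
    _ ≤ σ * (lam * ‖x‖) := mul_le_mul_of_nonneg_left hule hσ0
    _ = (σ * lam) * ‖x‖ := by ring
    _ ≤ 1 * ‖x‖ := mul_le_mul_of_nonneg_right hσlam (norm_nonneg _)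
    _ = ‖x‖ := one_mul _
    _ ≤ ‖Matrix.toEuclideanCLM (𝕜 := ℝ) (MA * MB)‖ := hxle
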